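/- For all nonnegative integers n, the sum over k from 0 to floor(n/4) of (1/(4k+1)) * C(5k, k) * C(n+k, 5k) equals the sum over k from 0 to floor(n/2) of ((-1)^k/(n+1)) * C(n+k, k) * C(2n-2k, n). -/

import Mathlib

open Finset PowerSeries
noncomputable section
namespace Sun4

def g (M : ℕ) : ℚ⟦X⟧ := PowerSeries.mk fun i => ((M + i).choose i : ℚ)
def h (M : ℕ) : ℚ⟦X⟧ := PowerSeries.mk fun i =>
  if Even i then (-1)^(i/2) * ((M + i/2).choose (i/2) : ℚ) else 0
def G : ℕ → ℚ⟦X⟧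
  | 0 => 1
  | M+1 => g M * h M
def q : ℚ⟦X⟧ := (1 - X) * (1 + X^2)

lemma g_rel (M : ℕ) : (1 - X) * g (M+1) = g M := by
  ext n
  rw [sub_mul, one_mul, map_sub]
  rcases n with _ | m
  · simp [g, coeff_mk, coeff_zero_X_mul]
  · rw [coeff_succ_X_mul]
    simp only [g, coeff_mk]
    have h1 : (M + (m+1) + 1).choose (m+1) = (M + (m+1)).choose m + (M + (m+1)).choose (m+1) :=
      Nat.choose_succ_succ' (M + (m+1)) m
    rw [show M + 1 + (m+1) = M + (m+1) + 1 by omega, h1]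
    push_cast
    ring

lemma g_base : (1 - X) * g 0 = 1 := by
  ext n
  rw [sub_mul, one_mul, map_sub]
  rcases n with _ | m
  · simp [g, coeff_mk, coeff_zero_X_mul]
  · rw [coeff_succ_X_mul]
    simp [g, coeff_mk, coeff_one]

lemma h_rel (M : ℕ) : (1 + X^2) * h (M+1) = h M := by
  ext n
  rw [add_mul, one_mul, map_add]
  rcases lt_or_ge n 2 with hn | hn
  · have h2 : (coeff n) (X^2 * h (M+1)) = 0 := by
      interval_cases n <;> simp [PowerSeries.coeff_X_pow_mul'] <;> norm_num
    rw [h2, add_zero]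
    interval_cases n <;> simp [h, coeff_mk]
  · obtain ⟨m, rfl⟩ : ∃ m, n = m + 2 := ⟨n - 2, by omega⟩
    have h2 : (coeff (m+2)) (X^2 * h (M+1)) = (coeff m) (h (M+1)) :=
      PowerSeries.coeff_X_pow_mul (h (M+1)) 2 m
    rw [h2]
    simp only [h, coeff_mk]
    by_cases he : Even m
    · obtain ⟨j, rfl⟩ := he
      have he1 : Even (j + j) := ⟨j, rfl⟩
      have he2 : Even (j + j + 2) := ⟨j+1, by omega⟩
      simp only [if_pos he1, if_pos he2]
      have hd1 : (j + j)/2 = j := by omega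
      have hd2 : (j + j + 2)/2 = j + 1 := by omega
      rw [hd1, hd2]
      have h1 : (M + (j+1) + 1).choose (j+1) = (M + (j+1)).choose j + (M + (j+1)).choose (j+1) :=
        Nat.choose_succ_succ' (M + (j+1)) j
      rw [show M + 1 + (j+1) = M + (j+1) + 1 by omega, h1,
        show M + 1 + j = M + (j + 1) by omega]
      push_cast
      ring
    · have he2 : ¬ Even (m + 2) := fun ⟨j, hj⟩ => he ⟨j-1, by omega⟩
      simp only [if_neg he, if_neg he2]; ring

lemma h_base : (1 + X^2) * h 0 = 1 := by
  ext n
  rw [add_mul, one_mul, map_add]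
  rcases lt_or_ge n 2 with hn | hn
  · have h2 : (coeff n) (X^2 * h 0) = 0 := by
      interval_cases n <;> simp [PowerSeries.coeff_X_pow_mul'] <;> norm_num
    rw [h2, add_zero]
    interval_cases n <;> simp [h, coeff_mk, coeff_one]
  · obtain ⟨m, rfl⟩ : ∃ m, n = m + 2 := ⟨n - 2, by omega⟩
    have h2 : (coeff (m+2)) (X^2 * h 0) = (coeff m) (h 0) :=
      PowerSeries.coeff_X_pow_mul (h 0) 2 m
    rw [h2]
    simp only [h, coeff_mk, coeff_one]
    by_cases he : Even m
    · obtain ⟨j, rfl⟩ := he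
      have he2 : Even (j + j + 2) := ⟨j+1, by omega⟩
      simp only [if_pos (⟨j, rfl⟩ : Even (j+j)), if_pos he2]
      have hd1 : (j + j)/2 = j := by omega
      have hd2 : (j + j + 2)/2 = j + 1 := by omega
      rw [hd1, hd2]
      simp [pow_succ]
    · have he2 : ¬ Even (m + 2) := fun ⟨j, hj⟩ => he ⟨j-1, by omega⟩
      simp only [if_neg he, if_neg he2]
      simp

lemma G_rel (M : ℕ) : q * G (M+1) = G M := by
  rcases M with _ | M
  · show q * (g 0 * h 0) = 1
    rw [q]
    calc (1 - X) * (1 + X^2) * (g 0 * h 0) = ((1-X) * g 0) * ((1 + X^2) * h 0) := by ring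
    _ = 1 := by rw [g_base, h_base, one_mul]
  · show q * (g (M+1) * h (M+1)) = g M * h M
    rw [q]
    calc (1 - X) * (1 + X^2) * (g (M+1) * h (M+1))
        = ((1-X) * g (M+1)) * ((1 + X^2) * h (M+1)) := by ring
    _ = g M * h M := by rw [g_rel, h_rel]

lemma q_ne : q ≠ 0 := by
  intro hq
  have : (constantCoeff) q = 1 := by
    rw [q]; simp
  rw [hq] at this; simp at this

lemma Dq : PowerSeries.derivativeFun q = -(1 - 2*X + 3*X^2) := by
  have hq : q = 1 - X + X^2 - X^3 := by rw [q]; ring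
  have hq2 : q = 1 - X + X^2 - X^3 := hq
  have hr : -(1 - 2*X + 3*X^2 : ℚ⟦X⟧) = -(1 - (X + X) + (X^2 + X^2 + X^2)) := by ring
  rw [hq2, hr]
  ext n
  rw [show ∀ (f : ℚ⟦X⟧) (n : ℕ), coeff n f.derivativeFun = coeff (n + 1) f * (n + 1) from fun f n => coeff_derivative f n]
  rcases n with _ | _ | _ | n <;>
    simp [map_sub, map_add, map_neg, coeff_one, PowerSeries.coeff_X, PowerSeries.coeff_X_pow] <;>
    norm_num


lemma DG (M : ℕ) : q * PowerSeries.derivativeFun (G M) =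
    PowerSeries.C (M : ℚ) * ((1 - 2*X + 3*X^2) * G M) := by
  induction M with
  | zero =>
    have h1 : G 0 = 1 := rfl
    have h2 : PowerSeries.derivativeFun (G 0) = 0 := by
      rw [h1, show (1 : ℚ⟦X⟧) = PowerSeries.C 1 from (map_one _).symm]
      exact derivative_C
    rw [h2]
    simp
  | succ M ih =>
    have hrel := G_rel M
    have hd := derivativeFun_mul q (G (M+1))
    rw [hrel] at hd
    simp only [smul_eq_mul] at hd
    have step : q * (q * PowerSeries.derivativeFun (G (M+1)))
        = q * (PowerSeries.C ((M+1 : ℕ) : ℚ) * ((1 - 2*X + 3*X^2) * G (M+1))) := by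
      have e1 : q * (q * PowerSeries.derivativeFun (G (M+1)))
          = q * PowerSeries.derivativeFun (G M) - q * (G (M+1) * PowerSeries.derivativeFun q) := by
        rw [hd]; ring
      rw [e1, ih, Dq]
      have e2 : q * G (M+1) = G M := hrel
      push_cast
      calc PowerSeries.C (M : ℚ) * ((1 - 2*X + 3*X^2) * G M) -
            q * (G (M+1) * -(1 - 2*X + 3*X^2))
          = PowerSeries.C (M : ℚ) * ((1 - 2*X + 3*X^2) * G M) +
            (1 - 2*X + 3*X^2) * (q * G (M+1)) := by ring
        _ = PowerSeries.C (M : ℚ) * ((1 - 2*X + 3*X^2) * G M) +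
            (1 - 2*X + 3*X^2) * G M := by rw [e2]
        _ = q * (PowerSeries.C ((M : ℚ) + 1) * ((1 - 2*X + 3*X^2) * G (M+1))) := by
            rw [map_add, map_one, ← e2]; ring
    exact mul_left_cancel₀ q_ne step

def cf (f : ℚ⟦X⟧) (m : ℤ) : ℚ := if 0 ≤ m then coeff m.toNat f else 0

lemma cf_natCast (f : ℚ⟦X⟧) (n : ℕ) : cf f (n : ℤ) = coeff n f := by
  simp [cf]

lemma cf_neg (f : ℚ⟦X⟧) {m : ℤ} (h : m < 0) : cf f m = 0 := by
  simp [cf, not_le.mpr h]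

lemma cf_add (f g : ℚ⟦X⟧) (m : ℤ) : cf (f + g) m = cf f m + cf g m := by
  unfold cf; split <;> simp

lemma cf_sub (f g : ℚ⟦X⟧) (m : ℤ) : cf (f - g) m = cf f m - cf g m := by
  unfold cf; split <;> simp

lemma cf_X_mul (f : ℚ⟦X⟧) (m : ℤ) : cf (X * f) m = cf f (m - 1) := by
  rcases lt_trichotomy m 0 with hm | hm | hm
  · rw [cf_neg _ hm, cf_neg f (show m - 1 < 0 by omega)]
  · subst hm
    rw [cf_neg f (show (0:ℤ) - 1 < 0 by omega)]
    simp [cf, coeff_zero_X_mul]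
  · obtain ⟨k, rfl⟩ : ∃ k : ℕ, m = (k : ℤ) + 1 :=
      ⟨(m-1).toNat, by rw [Int.toNat_of_nonneg (by omega : (0:ℤ) ≤ m - 1)]; ring⟩
    rw [show ((k : ℤ) + 1 - 1) = (k : ℤ) by ring, cf_natCast]
    have : ((k : ℤ) + 1) = ((k + 1 : ℕ) : ℤ) := by push_cast; ring
    rw [this, cf_natCast, coeff_succ_X_mul]

lemma cf_X_pow_mul (f : ℚ⟦X⟧) (k : ℕ) (m : ℤ) : cf (X^k * f) m = cf f (m - k) := by
  induction k generalizing m with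
  | zero => simp
  | succ k ih =>
    have : (X^(k+1) : ℚ⟦X⟧) * f = X * (X^k * f) := by ring
    rw [this, cf_X_mul, ih]
    congr 1
    push_cast
    ring

lemma cf_C_mul (a : ℚ) (f : ℚ⟦X⟧) (m : ℤ) : cf (PowerSeries.C a * f) m = a * cf f m := by
  unfold cf; split <;> simp

lemma cf_D (f : ℚ⟦X⟧) (m : ℤ) : cf (PowerSeries.derivativeFun f) m = (m + 1) * cf f (m + 1) := by
  rcases lt_trichotomy m (-1) with hm | hm | hm
  · rw [cf_neg _ (show m < 0 by omega), cf_neg f (show m + 1 < 0 by omega)]; ring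
  · subst hm
    rw [cf_neg _ (by omega)]
    norm_num
  · obtain ⟨k, rfl⟩ : ∃ k : ℕ, m = (k : ℤ) :=
      ⟨m.toNat, (Int.toNat_of_nonneg (by omega)).symm⟩
    rw [cf_natCast, show ∀ (f : ℚ⟦X⟧) (n : ℕ), coeff n f.derivativeFun = coeff (n + 1) f * (n + 1) from fun f n => coeff_derivative f n]
    have : ((k : ℤ) + 1) = ((k + 1 : ℕ) : ℤ) := by push_cast; ring
    rw [this, cf_natCast]
    push_cast
    ring

lemma cf_q_mul (f : ℚ⟦X⟧) (m : ℤ) :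
    cf (q * f) m = cf f m - cf f (m - 1) + cf f (m - 2) - cf f (m - 3) := by
  have hq : q * f = f - X * f + X^2 * f - X^3 * f := by rw [q]; ring
  rw [hq]
  simp only [cf_sub, cf_add, cf_X_mul, cf_X_pow_mul]
  norm_num

lemma cf_p_mul (f : ℚ⟦X⟧) (m : ℤ) :
    cf ((1 - 2*X + 3*X^2) * f) m = cf f m - 2 * cf f (m - 1) + 3 * cf f (m - 2) := by
  have hp : (1 - 2*X + 3*X^2 : ℚ⟦X⟧) * f = f - (X * f + X * f) + (X^2 * f + X^2 * f + X^2 * f) := by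
    ring
  rw [hp]
  simp only [cf_sub, cf_add, cf_X_mul, cf_X_pow_mul]
  norm_num
  ring

def u (m : ℤ) (M : ℕ) : ℚ := cf (G M) m

lemma AZ (m : ℤ) (M : ℕ) :
    u m (M+1) - u (m-1) (M+1) + u (m-2) (M+1) - u (m-3) (M+1) = u m M := by
  have := congrArg (fun f => cf f m) (G_rel M)
  simpa [u, cf_q_mul] using this

lemma CZ (m : ℤ) (M : ℕ) :
    (m : ℚ) * u m M - ((m : ℚ) - 1) * u (m-1) M + ((m : ℚ) - 2) * u (m-2) M
      - ((m : ℚ) - 3) * u (m-3) M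
    = (M : ℚ) * (u (m-1) M - 2 * u (m-2) M + 3 * u (m-3) M) := by
  have := congrArg (fun f => cf f (m - 1)) (DG M)
  simp only [cf_q_mul, cf_C_mul, cf_p_mul, cf_D, u] at this ⊢
  have e1 : (m - 1 : ℤ) + 1 = m := by ring
  have e2 : (m - 1 - 1 : ℤ) + 1 = m - 1 := by ring
  have e3 : (m - 1 - 2 : ℤ) + 1 = m - 2 := by ring
  have e4 : (m - 1 - 3 : ℤ) + 1 = m - 3 := by ring
  rw [e1, e2, e3, e4] at this
  rw [show (m - 1 - 1 : ℤ) = m - 2 by ring, show (m - 1 - 2 : ℤ) = m - 3 by ring] at this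
  push_cast at this ⊢
  linarith [this]


lemma T (m : ℤ) (M : ℕ) :
    ((M:ℚ)+1-m)*M * u m (M+1) - ((M:ℚ)-m)*((M:ℚ)+1) * u m M
      - ((M:ℚ)+1-m)*((M:ℚ)+1) * u (m-1) M - ((M:ℚ)+5-m)*M * u (m-4) (M+1) = 0 := by
  have hA1 := AZ m M
  have hA2 := AZ (m-1) M
  have hC1 := CZ m (M+1)
  have hC2 := CZ (m-1) (M+1)
  rw [show (m-1-1 : ℤ) = m-2 by ring, show (m-1-2 : ℤ) = m-3 by ring,
    show (m-1-3 : ℤ) = m-4 by ring] at hA2 hC2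
  push_cast at hC1 hC2
  linear_combination (((M:ℚ)-m)*((M:ℚ)+1)) * hA1 + (((M:ℚ)+1-m)*((M:ℚ)+1)) * hA2 + hC1 + hC2

def VV : ℕ → ℚ⟦X⟧
  | 0 => 1
  | t+1 => PowerSeries.mk fun n => ((t+1 : ℚ)/((n:ℚ)+t+1)) * coeff n (G (n+t+1))

lemma VV_succ (k : ℕ) :
    VV (k+1) = PowerSeries.mk fun n => ((k+1 : ℚ)/((n:ℚ)+k+1)) * coeff n (G (n+k+1)) := rfl

lemma u_natCast (n M : ℕ) : u (n : ℤ) M = coeff n (G M) := cf_natCast _ n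

lemma u_neg {m : ℤ} (M : ℕ) (h : m < 0) : u m M = 0 := cf_neg _ h

lemma u_zero_one : u ((0:ℕ) : ℤ) 1 = 1 := by
  rw [u_natCast]
  show coeff 0 (g 0 * h 0) = 1
  rw [PowerSeries.coeff_zero_eq_constantCoeff, map_mul]
  have hg : constantCoeff (g 0) = 1 := by
    have : constantCoeff (g 0) = coeff 0 (g 0) := by
      rw [PowerSeries.coeff_zero_eq_constantCoeff]
    rw [this]; simp [g, coeff_mk]
  have hh : constantCoeff (h 0) = 1 := by
    have : constantCoeff (h 0) = coeff 0 (h 0) := by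
      rw [PowerSeries.coeff_zero_eq_constantCoeff]
    rw [this]; simp [h, coeff_mk]
  rw [hg, hh, mul_one]

lemma VRec (t : ℕ) : VV (t+1) = VV t + X * VV (t+1) + X^4 * VV (t+5) := by
  ext n
  rw [map_add, map_add]
  have hL : coeff n (VV (t+1)) = ((t+1 : ℚ)/((n:ℚ)+t+1)) * u (n:ℤ) (n+t+1) := by
    rw [VV_succ, coeff_mk, u_natCast]
  -- B term
  have hB : coeff n (X * VV (t+1)) = ((t+1 : ℚ)/((n:ℚ)+t)) * u ((n:ℤ)-1) (n+t) := by
    rcases n with _ | k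
    · rw [coeff_zero_X_mul, u_neg _ (by norm_num : ((0:ℕ):ℤ) - 1 < 0)]
      ring
    · rw [coeff_succ_X_mul, VV_succ, coeff_mk, ← u_natCast]
      have e : ((k+1 : ℕ) : ℤ) - 1 = (k : ℤ) := by push_cast; ring
      rw [e]
      have e2 : (k+1) + t = k + t + 1 := by omega
      rw [e2]
      push_cast
      ring_nf
  -- C term
  have hC : coeff n (X^4 * VV (t+5)) = ((t+5 : ℚ)/((n:ℚ)+t+1)) * u ((n:ℤ)-4) (n+t+1) := by
    rcases lt_or_ge n 4 with hn | hn
    · have hz : coeff n (X^4 * VV (t+5)) = 0 := by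
        have h2 := cf_X_pow_mul (VV (t+5)) 4 (n : ℤ)
        rw [cf_natCast] at h2
        rw [h2, cf_neg _ (by push_cast; omega : (n:ℤ) - (4:ℕ) < 0)]
      rw [hz, u_neg _ (by push_cast; omega : (n:ℤ) - 4 < 0)]
      ring
    · obtain ⟨k, rfl⟩ : ∃ k, n = k + 4 := ⟨n - 4, by omega⟩
      rw [PowerSeries.coeff_X_pow_mul, show t + 5 = (t+4)+1 by omega, VV_succ, coeff_mk,
        ← u_natCast]
      have e : ((k + 4 : ℕ) : ℤ) - 4 = (k : ℤ) := by push_cast; ring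
      rw [e]
      have e2 : k + (t + 4) + 1 = (k + 4) + t + 1 := by omega
      rw [e2]
      push_cast
      ring_nf
  rw [hL, hB, hC]
  -- A term plus main identity
  rcases Nat.eq_zero_or_pos (n + t) with hnt | hnt
  · -- n = 0, t = 0
    obtain ⟨hn0, ht0⟩ : n = 0 ∧ t = 0 := by omega
    subst hn0; subst ht0
    rw [u_neg _ (by norm_num : ((0:ℕ):ℤ) - 1 < 0), u_neg _ (by norm_num : ((0:ℕ):ℤ) - 4 < 0)]
    have hu : u ((0:ℕ):ℤ) (0+0+1) = 1 := u_zero_one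
    rw [hu]
    have hv0 : coeff 0 (VV 0) = 1 := by
      rw [show VV 0 = 1 from rfl, PowerSeries.coeff_one, if_pos rfl]
    rw [hv0]
    norm_num
  · have hmain := T (n : ℤ) (n + t)
    push_cast at hmain
    have hA : coeff n (VV t) = ((t : ℚ)/((n:ℚ)+t)) * u (n:ℤ) (n+t) := by
      rcases t with _ | s
      · -- t = 0 : VV 0 = 1, n ≥ 1 here
        have hn : 0 < n := by omega
        rw [show VV 0 = 1 from rfl]
        rw [PowerSeries.coeff_one, if_neg (by omega)]
        push_cast
        ring
      · rw [VV_succ, coeff_mk, ← u_natCast]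
        have e2 : n + s + 1 = n + (s+1) := by omega
        rw [e2]
        push_cast
        ring_nf
    rw [hA]
    have hd1 : ((n:ℚ)+t) ≠ 0 := by
      have : (0:ℚ) < (n:ℚ) + t := by exact_mod_cast Nat.cast_pos.mpr hnt
      exact ne_of_gt this
    have hd2 : ((n:ℚ)+t+1) ≠ 0 := by positivity
    field_simp
    linear_combination hmain


def fc (r k : ℕ) : ℚ := ((r : ℚ) / (5*(k:ℚ) + r)) * ((5*k + r).choose k : ℚ)

lemma fc_zero (k : ℕ) : fc 0 k = 0 := by
  unfold fc; simp

lemma fc_diag (r : ℕ) : fc (r+1) 0 = 1 := by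
  unfold fc
  simp
  positivity

lemma fc_id (s k : ℕ) : fc (s+1) (k+1) = fc s (k+1) + fc (s+5) k := by
  unfold fc
  have hP : ((5*(k+1) + (s+1)).choose (k+1) : ℚ)
      = ((5*k+s+5).choose k : ℚ) + ((5*k+s+5).choose (k+1) : ℚ) := by
    rw [show 5*(k+1) + (s+1) = (5*k+s+5) + 1 by ring]
    exact_mod_cast congrArg (Nat.cast : ℕ → ℚ) (Nat.choose_succ_succ' (5*k+s+5) k)
  have hR : ((5*k+s+5).choose (k+1) : ℚ) * ((k:ℚ)+1)
      = ((5*k+s+5).choose k : ℚ) * (4*(k:ℚ)+s+5) := by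
    have h1 := Nat.choose_succ_right_eq (5*k+s+5) k
    rw [show 5*k+s+5 - k = 4*k+s+5 by omega] at h1
    exact_mod_cast h1
  rw [show 5*(k+1) + s = 5*k+s+5 by ring, show 5*k + (s+5) = 5*k+s+5 by ring, hP]
  push_cast
  have d1 : (5*((k:ℚ)+1) + ((s:ℚ)+1)) ≠ 0 := by positivity
  have d2 : (5*((k:ℚ)+1) + (s:ℚ)) ≠ 0 := by positivity
  have d3 : (5*(k:ℚ) + ((s:ℚ)+5)) ≠ 0 := by positivity
  field_simp
  ring_nf
  ring_nf at hR
  nlinarith [hR, sq_nonneg ((k:ℚ)+1)]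


def ac (s n : ℕ) : ℚ := ∑ k ∈ range (n+1), fc (s+1) k * ((n + k + s).choose (5*k + s) : ℚ)

def AA : ℕ → ℚ⟦X⟧
  | 0 => 1
  | s+1 => PowerSeries.mk (ac s)

lemma AA_succ (s : ℕ) : AA (s+1) = PowerSeries.mk (ac s) := rfl

lemma ac_peel (s n : ℕ) :
    ac s n = ((n + s).choose s : ℚ)
      + ∑ k ∈ range n, fc (s+1) (k+1) * ((n + k + s + 1).choose (5*k + s + 5) : ℚ) := by
  unfold ac
  rw [Finset.sum_range_succ']
  rw [show n + 0 + s = n + s by ring, show 5*0 + s = s by ring, fc_diag, one_mul, add_comm]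
  congr 1
  apply Finset.sum_congr rfl
  intro k _
  rw [show n + (k+1) + s = n + k + s + 1 by ring, show 5*(k+1) + s = 5*k + s + 5 by ring]

lemma ac_zero (s : ℕ) : ac s 0 = 1 := by
  rw [ac_peel]
  simp

lemma ARec (t : ℕ) : AA (t+1) = AA t + X * AA (t+1) + X^4 * AA (t+5) := by
  ext n
  rw [map_add, map_add, AA_succ, coeff_mk]
  rcases n with _ | m
  · -- n = 0
    rw [ac_zero, coeff_zero_X_mul]
    have h4 : coeff 0 (X^4 * AA (t+5)) = 0 := by
      have := cf_X_pow_mul (AA (t+5)) 4 ((0:ℕ) : ℤ)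
      rw [cf_natCast] at this
      rw [this, cf_neg _ (by norm_num : ((0:ℕ):ℤ) - (4:ℕ) < 0)]
    rw [h4]
    have h0 : coeff 0 (AA t) = 1 := by
      rcases t with _ | σ
      · rw [show AA 0 = 1 from rfl, PowerSeries.coeff_one, if_pos rfl]
      · rw [AA_succ, coeff_mk, ac_zero]
    rw [h0]
    norm_num
  · -- n = m+1
    rw [coeff_succ_X_mul, AA_succ, coeff_mk]
    -- decompose LHS
    rw [ac_peel]
    -- Pascal on each tail term
    have hPascal : ∑ k ∈ range (m+1), fc (t+1) (k+1) * (((m+1) + k + t + 1).choose (5*k + t + 5) : ℚ)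
        = (∑ k ∈ range (m+1), fc (t+1) (k+1) * ((m + k + t + 1).choose (5*k + t + 4) : ℚ))
          + ∑ k ∈ range (m+1), fc (t+1) (k+1) * ((m + k + t + 1).choose (5*k + t + 5) : ℚ) := by
      rw [← Finset.sum_add_distrib]
      apply Finset.sum_congr rfl
      intro k _
      have hp : ((m+1) + k + t + 1).choose (5*k + t + 5)
          = (m + k + t + 1).choose (5*k + t + 4) + (m + k + t + 1).choose (5*k + t + 5) := by
        rw [show (m+1) + k + t + 1 = (m + k + t + 1) + 1 by ring,
          show 5*k + t + 5 = (5*k + t + 4) + 1 by ring]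
        exact Nat.choose_succ_succ' _ _
      rw [hp]
      push_cast
      ring
    rw [hPascal]
    -- Σ₃ + C(m+t,t) = ac t m
    have hS3 : ((m + t).choose t : ℚ)
          + ∑ k ∈ range (m+1), fc (t+1) (k+1) * ((m + k + t + 1).choose (5*k + t + 5) : ℚ)
        = ac t m := by
      rw [ac_peel]
      congr 1
      rw [Finset.sum_range_succ]
      have hz : ((m + m + t + 1).choose (5*m + t + 5) : ℚ) = 0 := by
        rw [Nat.choose_eq_zero_of_lt (by omega)]
        norm_num
      rw [hz, mul_zero, add_zero]
    -- Σ₂ split by fc_id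
    have hS2 : ∑ k ∈ range (m+1), fc (t+1) (k+1) * ((m + k + t + 1).choose (5*k + t + 4) : ℚ)
        = (∑ k ∈ range (m+1), fc t (k+1) * ((m + k + t + 1).choose (5*k + t + 4) : ℚ))
          + ∑ k ∈ range (m+1), fc (t+5) k * ((m + k + t + 1).choose (5*k + t + 4) : ℚ) := by
      rw [← Finset.sum_add_distrib]
      apply Finset.sum_congr rfl
      intro k _
      rw [fc_id]
      ring
    rw [hS2]
    -- A-term with Pascal correction:
    have hA : ((m + 1 + t).choose t : ℚ)
          + ∑ k ∈ range (m+1), fc t (k+1) * ((m + k + t + 1).choose (5*k + t + 4) : ℚ)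
        = coeff (m+1) (AA t) + ((m + t).choose t : ℚ) := by
      rcases t with _ | σ
      · -- t = 0
        rw [show AA 0 = 1 from rfl, PowerSeries.coeff_one, if_neg (by omega)]
        have hz : ∀ k ∈ range (m+1), fc 0 (k+1) * ((m + k + 0 + 1).choose (5*k + 0 + 4) : ℚ) = 0 := by
          intro k _
          rw [fc_zero]
          ring
        rw [Finset.sum_congr rfl hz, Finset.sum_const_zero]
        simp
      · rw [AA_succ, coeff_mk, ac_peel]
        have hp : (m + 1 + (σ+1)).choose (σ+1)
            = (m + 1 + σ).choose σ + (m + 1 + σ).choose (σ+1) := by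
          rw [show m + 1 + (σ+1) = (m + 1 + σ) + 1 by ring]
          exact Nat.choose_succ_succ' _ _
        have htail : ∑ k ∈ range (m+1), fc (σ+1) (k+1) * ((m + k + (σ+1) + 1).choose (5*k + (σ+1) + 4) : ℚ)
            = ∑ k ∈ range (m+1), fc (σ+1) (k+1) * (((m+1) + k + σ + 1).choose (5*k + σ + 5) : ℚ) := by
          apply Finset.sum_congr rfl
          intro k _
          rw [show m + k + (σ+1) + 1 = (m+1) + k + σ + 1 by ring,
            show 5*k + (σ+1) + 4 = 5*k + σ + 5 by ring]
        rw [htail, hp, show m + (σ+1) = m + 1 + σ by ring]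
        push_cast
        ring
    -- X^4 term
    have hX4 : coeff (m+1) (X^4 * PowerSeries.mk (ac (t+4)))
        = ∑ k ∈ range (m+1), fc (t+5) k * ((m + k + t + 1).choose (5*k + t + 4) : ℚ) := by
      rcases lt_or_ge m 3 with hm | hm
      · have hz : coeff (m+1) (X^4 * PowerSeries.mk (ac (t+4))) = 0 := by
          have h2 := cf_X_pow_mul (PowerSeries.mk (ac (t+4))) 4 ((m+1 : ℕ) : ℤ)
          rw [cf_natCast] at h2
          rw [h2, cf_neg _ (by push_cast; omega : ((m+1:ℕ):ℤ) - (4:ℕ) < 0)]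
        rw [hz]
        symm
        apply Finset.sum_eq_zero
        intro k _
        rw [Nat.choose_eq_zero_of_lt (by omega)]
        norm_num
      · obtain ⟨p, rfl⟩ : ∃ p, m = p + 3 := ⟨m - 3, by omega⟩
        have h2 : coeff (p+3+1) (X^4 * PowerSeries.mk (ac (t+4))) = ac (t+4) p := by
          rw [show p+3+1 = p + 4 by ring]
          have := PowerSeries.coeff_X_pow_mul (PowerSeries.mk (ac (t+4))) 4 p
          rw [this, coeff_mk]
        rw [h2]
        have hc : ac (t+4) p
            = ∑ k ∈ range (p+1), fc (t+5) k * (((p+3) + k + t + 1).choose (5*k + t + 4) : ℚ) := by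
          unfold ac
          apply Finset.sum_congr rfl
          intro k _
          rw [show p + k + (t+4) = (p+3) + k + t + 1 by ring,
            show 5*k + (t+4) = 5*k + t + 4 by ring,
            show (t+4) + 1 = t + 5 by ring]
        rw [hc]
        apply Finset.sum_subset (Finset.range_subset_range.mpr (by omega : p + 1 ≤ p + 3 + 1))
        intro k hk hnk
        simp only [Finset.mem_range] at hk hnk
        rw [Nat.choose_eq_zero_of_lt (by omega)]
        norm_num
    rw [hX4]
    linarith [hS3, hA]


lemma famUnique {F H : ℕ → ℚ⟦X⟧} (h0 : F 0 = H 0)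
    (hF : ∀ t, F (t+1) = F t + X * F (t+1) + X^4 * F (t+5))
    (hH : ∀ t, H (t+1) = H t + X * H (t+1) + X^4 * H (t+5)) :
    ∀ r, F r = H r := by
  have key : ∀ n r, coeff n (F r) = coeff n (H r) := by
    intro n
    induction n using Nat.strong_induction_on with
    | _ n ih =>
      intro r
      induction r with
      | zero => rw [h0]
      | succ t iht =>
        have e1 : coeff n (X * F (t+1)) = coeff n (X * H (t+1)) := by
          rcases n with _ | k
          · rw [coeff_zero_X_mul, coeff_zero_X_mul]
          · rw [coeff_succ_X_mul, coeff_succ_X_mul]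
            exact ih k (by omega) (t+1)
        have e2 : coeff n (X^4 * F (t+5)) = coeff n (X^4 * H (t+5)) := by
          rcases lt_or_ge n 4 with hn | hn
          · have z1 : coeff n (X^4 * F (t+5)) = 0 := by
              have h2 := cf_X_pow_mul (F (t+5)) 4 ((n:ℕ) : ℤ)
              rw [cf_natCast] at h2
              rw [h2, cf_neg _ (by push_cast; omega : ((n:ℕ):ℤ) - (4:ℕ) < 0)]
            have z2 : coeff n (X^4 * H (t+5)) = 0 := by
              have h2 := cf_X_pow_mul (H (t+5)) 4 ((n:ℕ) : ℤ)
              rw [cf_natCast] at h2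
              rw [h2, cf_neg _ (by push_cast; omega : ((n:ℕ):ℤ) - (4:ℕ) < 0)]
            rw [z1, z2]
          · obtain ⟨k, rfl⟩ : ∃ k, n = k + 4 := ⟨n - 4, by omega⟩
            rw [PowerSeries.coeff_X_pow_mul, PowerSeries.coeff_X_pow_mul]
            exact ih k (by omega) (t+5)
        rw [hF t, hH t, map_add, map_add, map_add, map_add, iht, e1, e2]
  intro r
  ext n
  exact key n r

lemma AA_eq_VV : ∀ r, AA r = VV r :=
  famUnique rfl ARec VRec

-- choice-function identity for the LHS terms
lemma lhs_term (k : ℕ) : (1 / (4*(k:ℚ) + 1)) * ((5*k).choose k : ℚ) = fc 1 k := by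
  unfold fc
  have h1 : (5*k+1) * ((5*k).choose k) = ((5*k+1).choose (k+1)) * (k+1) :=
    (Nat.add_one_mul_choose_eq (5*k) k)
  have h2 : ((5*k+1).choose (k+1)) * (k+1) = ((5*k+1).choose k) * (4*k+1) := by
    have := Nat.choose_succ_right_eq (5*k+1) k
    rw [show 5*k+1-k = 4*k+1 by omega] at this
    exact this
  have key : ((5*k+1) : ℚ) * ((5*k).choose k : ℚ) = ((5*k+1).choose k : ℚ) * (4*(k:ℚ)+1) := by
    exact_mod_cast h1.trans h2
  have d1 : (4*(k:ℚ)+1) ≠ 0 := by positivity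
  have d2 : (5*(k:ℚ)+1) ≠ 0 := by positivity
  rw [show 5*k + 1 = 5*k+1 by ring]
  push_cast
  field_simp
  linarith [key]


lemma coeff_gh (n : ℕ) : coeff n (g n * h n)
    = ∑ j ∈ range (n/2+1),
        (-1)^j * ((n+j).choose j : ℚ) * ((2*n - 2*j).choose n : ℚ) := by
  rw [coeff_mul, Finset.Nat.sum_antidiagonal_eq_sum_range_succ_mk]
  have step1 : ∑ k ∈ range (n+1), coeff k (g n) * coeff (n-k) (h n)
      = ∑ k ∈ (range (n+1)).filter (fun k => Even (n - k)),
          coeff k (g n) * coeff (n-k) (h n) := by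
    symm
    apply Finset.sum_filter_of_ne
    intro x _ hne
    by_contra hodd
    apply hne
    have : coeff (n-x) (h n) = 0 := by
      simp only [h, coeff_mk, if_neg hodd]
    rw [this, mul_zero]
  rw [step1]
  have step2 : (range (n+1)).filter (fun k => Even (n - k))
      = (range (n/2+1)).image (fun j => n - 2*j) := by
    ext a
    simp only [Finset.mem_filter, Finset.mem_range, Finset.mem_image, Nat.even_iff]
    constructor
    · rintro ⟨ha, he⟩
      exact ⟨(n-a)/2, by omega, by omega⟩
    · rintro ⟨j, hj, rfl⟩
      constructor <;> omega
  have hinj : ∀ i ∈ range (n/2+1), ∀ j ∈ range (n/2+1), n - 2*i = n - 2*j → i = j := by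
    intro i hi j hj hij
    simp only [Finset.mem_range] at hi hj
    omega
  rw [step2, Finset.sum_image hinj]
  apply Finset.sum_congr rfl
  intro j hj
  simp only [Finset.mem_range] at hj
  have h2j : 2*j ≤ n := by omega
  have e1 : n - (n - 2*j) = 2*j := by omega
  rw [e1]
  have hhe : Even (2*j) := ⟨j, by ring⟩
  have e2 : (2*j)/2 = j := by omega
  simp only [g, h, coeff_mk, if_pos hhe, e2]
  have e3 : n + (n - 2*j) = 2*n - 2*j := by omega
  rw [e3]
  have e4 : (2*n - 2*j).choose (n - 2*j) = (2*n - 2*j).choose n := by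
    rw [show n - 2*j = 2*n - 2*j - n by omega]
    exact Nat.choose_symm (by omega)
  rw [e4]
  ring

end Sun4

open Finset

theorem sun_identity_4 (n : ℕ) :
    ∑ k ∈ range (n / 4 + 1),
      (1 / (4 * (k : ℚ) + 1)) * ((5 * k).choose k) * ((n + k).choose (5 * k)) =
    ∑ k ∈ range (n / 2 + 1),
      ((-1) ^ k / ((n : ℚ) + 1)) * ((n + k).choose k) * ((2 * n - 2 * k).choose n) := by
  have hmain : PowerSeries.coeff n (Sun4.AA 1) = PowerSeries.coeff n (Sun4.VV 1) := by
    rw [Sun4.AA_eq_VV]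
  have hL : PowerSeries.coeff n (Sun4.AA 1)
      = ∑ k ∈ range (n / 4 + 1),
          (1 / (4 * (k : ℚ) + 1)) * ((5 * k).choose k) * ((n + k).choose (5 * k)) := by
    rw [show Sun4.AA 1 = PowerSeries.mk (Sun4.ac 0) from rfl, PowerSeries.coeff_mk]
    unfold Sun4.ac
    rw [← Finset.sum_subset (Finset.range_subset_range.mpr (show n/4+1 ≤ n+1 by omega))]
    · apply Finset.sum_congr rfl
      intro k _
      rw [show (0:ℕ)+1 = 1 from rfl, ← Sun4.lhs_term k,
        show n + k + 0 = n + k by ring, show 5*k + 0 = 5*k by ring]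
    · intro k hk hnk
      simp only [Finset.mem_range] at hk hnk
      rw [show n + k + 0 = n + k by ring, show 5*k + 0 = 5*k by ring,
        Nat.choose_eq_zero_of_lt (by omega)]
      norm_num
  have hR : PowerSeries.coeff n (Sun4.VV 1)
      = ∑ k ∈ range (n / 2 + 1),
          ((-1) ^ k / ((n : ℚ) + 1)) * ((n + k).choose k) * ((2 * n - 2 * k).choose n) := by
    rw [show Sun4.VV 1 = PowerSeries.mk (fun m => ((0+1 : ℚ)/((m:ℚ)+0+1)) *
        PowerSeries.coeff m (Sun4.G (m+0+1))) from rfl, PowerSeries.coeff_mk]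
    rw [show n + 0 + 1 = n + 1 from rfl, show Sun4.G (n+1) = Sun4.g n * Sun4.h n from rfl,
      Sun4.coeff_gh n, Finset.mul_sum]
    apply Finset.sum_congr rfl
    intro j _
    have d : ((n:ℚ)+1) ≠ 0 := by positivity
    field_simp
    ring
  rw [← hL, ← hR, hmain]
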